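/- Let K ⊆ ℝ^d be nonempty, closed, and convex, and let L : ℝ^k × ℝ^d → ℝ be differentiable with ℓ-Lipschitz gradient on ℝ^k × K, such that for every x ∈ ℝ^k the function λ ↦ L(x,λ) is μ-strongly concave on K (with μ > 0). Then for every x the maximum of L(x,·) over K is attained at a unique point λ*(x), and with κ := ℓ/μ and φ(x) := max_{λ∈K} L(x,λ): (i) the map x ↦ λ*(x) is κ-Lipschitz; (ii) φ is differentiable with ∇φ(x) = ∇_x L(x, λ*(x)); and (iii) ∇φ is (ℓ + κℓ)-Lipschitz, i.e., φ is (ℓ + κℓ)-smooth. -/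

import Mathlib

set_option maxHeartbeats 1000000


open scoped RealInnerProductSpace

noncomputable section

/-- The ℓ²-product `ℝ^k ×₂ ℝ^d` of Euclidean spaces. -/
abbrev ProdL2 (k d : ℕ) := WithLp 2 (EuclideanSpace ℝ (Fin k) × EuclideanSpace ℝ (Fin d))

/-- Build a point of the ℓ²-product from its two components. -/
def pairL2 (k d : ℕ) (x : EuclideanSpace ℝ (Fin k)) (l : EuclideanSpace ℝ (Fin d)) :
    ProdL2 k d :=
  (WithLp.equiv 2 (EuclideanSpace ℝ (Fin k) × EuclideanSpace ℝ (Fin d))).symm (x, l)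

namespace MaxSmoothAux

open Filter Topology Asymptotics

section General

variable {F : Type*} [NormedAddCommGroup F] [InnerProductSpace ℝ F] [CompleteSpace F]

lemma le_on_sq {a b : ℝ} (ha : 0 ≤ a) (hb : 0 ≤ b) (h : a ^ 2 ≤ b ^ 2) : a ≤ b := by
  nlinarith

lemma hasDerivAt_line (f : F → ℝ) {G a : F} (hf : HasGradientAt f G a) (v : F) :
    HasDerivAt (fun t : ℝ => f (a + t • v)) ⟪G, v⟫ 0 := by
  have h1 : HasDerivAt (fun t : ℝ => a + t • v) v 0 := by
    simpa using ((hasDerivAt_id (0 : ℝ)).smul_const v).const_add a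
  have h0 : a = a + (0 : ℝ) • v := by simp
  have h2 := (h0 ▸ hf.hasFDerivAt).comp_hasDerivAt 0 h1
  exact h2

lemma strongConcaveOn_first_order {K : Set F} {μ : ℝ} {f : F → ℝ} {G : F → F}
    (hf : ∀ y, HasGradientAt f (G y) y) (hc : StrongConcaveOn K μ f)
    {a b : F} (ha : a ∈ K) (hb : b ∈ K) :
    f b + μ / 2 * ‖b - a‖ ^ 2 ≤ f a + ⟪G a, b - a⟫ := by
  have hd := hasDerivAt_line f (hf a) (b - a)
  have hmono : Tendsto (slope (fun t : ℝ => f (a + t • (b - a))) 0) (𝓝[>] (0 : ℝ))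
      (𝓝 ⟪G a, b - a⟫) :=
    (hasDerivAt_iff_tendsto_slope.mp hd).mono_left
      (nhdsWithin_mono _ (fun t ht => ne_of_gt ht))
  have hR : Tendsto (fun t : ℝ => f b - f a + (1 - t) * (μ / 2 * ‖a - b‖ ^ 2)) (𝓝[>] (0 : ℝ))
      (𝓝 (f b - f a + (1 - 0) * (μ / 2 * ‖a - b‖ ^ 2))) := by
    apply Tendsto.mono_left _ nhdsWithin_le_nhds
    exact (Continuous.tendsto (by continuity) 0)
  have hev : ∀ᶠ t in 𝓝[>] (0 : ℝ),
      (fun t : ℝ => f b - f a + (1 - t) * (μ / 2 * ‖a - b‖ ^ 2)) t ≤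
        slope (fun t : ℝ => f (a + t • (b - a))) 0 t := by
    filter_upwards [Ioc_mem_nhdsGT_of_mem (Set.mem_Ico.mpr ⟨le_refl (0:ℝ), zero_lt_one⟩)]
      with t ht
    have hcc := hc.2 ha hb (by linarith [ht.2] : (0:ℝ) ≤ 1 - t) ht.1.le (by ring)
    have hpt : (1 - t) • a + t • b = a + t • (b - a) := by module
    rw [hpt] at hcc
    simp only [smul_eq_mul] at hcc
    have h0 : a + (0:ℝ) • (b - a) = a := by simp
    rw [slope_def_field, h0, sub_zero, le_div_iff₀ ht.1]
    nlinarith [hcc]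
  have hle := le_of_tendsto_of_tendsto hR hmono hev
  have hnorm : ‖a - b‖ = ‖b - a‖ := norm_sub_rev _ _
  rw [hnorm] at hle
  linarith [hle]

lemma isMaxOn_inner_le {K : Set F} {f : F → ℝ} {G : F → F}
    (hf : ∀ y, HasGradientAt f (G y) y) (hKconv : Convex ℝ K)
    {a b : F} (ha : a ∈ K) (hb : b ∈ K) (hmax : ∀ l ∈ K, f l ≤ f a) :
    ⟪G a, b - a⟫ ≤ 0 := by
  have hd := hasDerivAt_line f (hf a) (b - a)
  have hmono : Tendsto (slope (fun t : ℝ => f (a + t • (b - a))) 0) (𝓝[>] (0 : ℝ))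
      (𝓝 ⟪G a, b - a⟫) :=
    (hasDerivAt_iff_tendsto_slope.mp hd).mono_left
      (nhdsWithin_mono _ (fun t ht => ne_of_gt ht))
  refine le_of_tendsto hmono ?_
  filter_upwards [Ioc_mem_nhdsGT_of_mem (Set.mem_Ico.mpr ⟨le_refl (0:ℝ), zero_lt_one⟩)]
    with t ht
  have hpt : a + t • (b - a) = (1 - t) • a + t • b := by module
  have hmem : a + t • (b - a) ∈ K := by
    rw [hpt]
    exact hKconv ha hb (by linarith [ht.2]) ht.1.le (by ring)
  have hle : f (a + t • (b - a)) ≤ f a := hmax _ hmem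
  have h0 : a + (0:ℝ) • (b - a) = a := by simp
  rw [slope_def_field, h0]
  apply div_nonpos_of_nonpos_of_nonneg <;> [linarith; linarith [ht.1]]

lemma strong_mono {K : Set F} {μ : ℝ} {f : F → ℝ} {G : F → F}
    (hf : ∀ y, HasGradientAt f (G y) y) (hc : StrongConcaveOn K μ f)
    {a b : F} (ha : a ∈ K) (hb : b ∈ K) :
    μ * ‖b - a‖ ^ 2 ≤ ⟪G a - G b, b - a⟫ := by
  have h1 := strongConcaveOn_first_order hf hc ha hb
  have h2 := strongConcaveOn_first_order hf hc hb ha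
  have e1 : ⟪G a - G b, b - a⟫ = ⟪G a, b - a⟫ - ⟪G b, b - a⟫ := inner_sub_left _ _ _
  have e2 : ⟪G b, a - b⟫ = -⟪G b, b - a⟫ := by
    rw [show a - b = -(b - a) by abel, inner_neg_right]
  have hnorm : ‖a - b‖ = ‖b - a‖ := norm_sub_rev _ _
  rw [hnorm] at h2
  rw [e2] at h2
  linarith [h1, h2, e1.ge, e1.le]

lemma hasGradientAt_of_quad {f : F → ℝ} {g x : F} {C : ℝ} (hC : 0 ≤ C)
    (h : ∀ y, |f y - f x - ⟪g, y - x⟫| ≤ C * ‖y - x‖ ^ 2) : HasGradientAt f g x := by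
  rw [hasGradientAt_iff_hasFDerivAt]
  refine HasFDerivAt.of_isLittleO ?_
  have h1 : (fun y => f y - f x - (InnerProductSpace.toDual ℝ F g) (y - x))
      =O[𝓝 x] (fun y => ‖y - x‖ ^ 2) := by
    rw [isBigO_iff]
    refine ⟨C, Eventually.of_forall fun y => ?_⟩
    simpa [Real.norm_eq_abs, abs_of_nonneg (sq_nonneg (‖y - x‖)),
      InnerProductSpace.toDual_apply_apply] using h y
  have h2 : (fun y : F => ‖y - x‖ ^ 2) =o[𝓝 x] (fun y => y - x) := by
    rw [isLittleO_iff]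
    intro c hc
    filter_upwards [Metric.closedBall_mem_nhds x hc] with y hy
    have hyc : ‖y - x‖ ≤ c := by rwa [Metric.mem_closedBall, dist_eq_norm] at hy
    calc ‖‖y - x‖ ^ 2‖ = ‖y - x‖ * ‖y - x‖ := by
          rw [Real.norm_eq_abs, abs_of_nonneg (sq_nonneg _), sq]
      _ ≤ c * ‖y - x‖ := mul_le_mul_of_nonneg_right hyc (norm_nonneg _)
  exact h1.trans_isLittleO h2

end General

section Prod

variable {k d : ℕ}

lemma pair_fst (x : EuclideanSpace ℝ (Fin k)) (l : EuclideanSpace ℝ (Fin d)) :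
    (pairL2 k d x l).fst = x := rfl

lemma pair_snd (x : EuclideanSpace ℝ (Fin k)) (l : EuclideanSpace ℝ (Fin d)) :
    (pairL2 k d x l).snd = l := rfl

lemma pair_sub (x x' : EuclideanSpace ℝ (Fin k)) (l l' : EuclideanSpace ℝ (Fin d)) :
    pairL2 k d x l - pairL2 k d x' l' = pairL2 k d (x - x') (l - l') := rfl

lemma pair_norm_sq (x : EuclideanSpace ℝ (Fin k)) (l : EuclideanSpace ℝ (Fin d)) :
    ‖pairL2 k d x l‖ ^ 2 = ‖x‖ ^ 2 + ‖l‖ ^ 2 := by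
  rw [WithLp.prod_norm_sq_eq_of_L2, pair_fst, pair_snd]

lemma pair_norm_fst (x : EuclideanSpace ℝ (Fin k)) :
    ‖pairL2 k d x 0‖ = ‖x‖ := by
  have h := pair_norm_sq (d := d) x 0
  simp only [norm_zero, ne_eq, OfNat.ofNat_ne_zero, not_false_eq_true, zero_pow, add_zero] at h
  calc ‖pairL2 k d x 0‖ = Real.sqrt (‖pairL2 k d x 0‖ ^ 2) := (Real.sqrt_sq (norm_nonneg _)).symm
    _ = Real.sqrt (‖x‖ ^ 2) := by rw [h]
    _ = ‖x‖ := Real.sqrt_sq (norm_nonneg _)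

lemma pair_norm_snd (l : EuclideanSpace ℝ (Fin d)) :
    ‖pairL2 k d 0 l‖ = ‖l‖ := by
  have h := pair_norm_sq (k := k) 0 l
  simp only [norm_zero, ne_eq, OfNat.ofNat_ne_zero, not_false_eq_true, zero_pow, zero_add] at h
  calc ‖pairL2 k d 0 l‖ = Real.sqrt (‖pairL2 k d 0 l‖ ^ 2) := (Real.sqrt_sq (norm_nonneg _)).symm
    _ = Real.sqrt (‖l‖ ^ 2) := by rw [h]
    _ = ‖l‖ := Real.sqrt_sq (norm_nonneg _)

lemma inner_pair (u : ProdL2 k d) (v : EuclideanSpace ℝ (Fin k)) (w : EuclideanSpace ℝ (Fin d)) :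
    ⟪u, pairL2 k d v w⟫ = ⟪u.fst, v⟫ + ⟪u.snd, w⟫ := by
  rw [WithLp.prod_inner_apply]; rfl

lemma fst_norm_le (p : ProdL2 k d) : ‖p.fst‖ ≤ ‖p‖ := by
  have h := WithLp.prod_norm_sq_eq_of_L2 p
  exact le_on_sq (norm_nonneg _) (norm_nonneg _) (by nlinarith [sq_nonneg ‖p.snd‖])

lemma snd_norm_le (p : ProdL2 k d) : ‖p.snd‖ ≤ ‖p‖ := by
  have h := WithLp.prod_norm_sq_eq_of_L2 p
  exact le_on_sq (norm_nonneg _) (norm_nonneg _) (by nlinarith [sq_nonneg ‖p.fst‖])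

/-- the continuous linear embedding `v ↦ (v, 0)` -/
def jk (k d : ℕ) : EuclideanSpace ℝ (Fin k) →L[ℝ] ProdL2 k d :=
  ((WithLp.prodContinuousLinearEquiv 2 ℝ (EuclideanSpace ℝ (Fin k))
    (EuclideanSpace ℝ (Fin d))).symm.toContinuousLinearMap).comp
    (ContinuousLinearMap.inl ℝ _ _)

/-- the continuous linear embedding `w ↦ (0, w)` -/
def jd (k d : ℕ) : EuclideanSpace ℝ (Fin d) →L[ℝ] ProdL2 k d :=
  ((WithLp.prodContinuousLinearEquiv 2 ℝ (EuclideanSpace ℝ (Fin k))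
    (EuclideanSpace ℝ (Fin d))).symm.toContinuousLinearMap).comp
    (ContinuousLinearMap.inr ℝ _ _)

lemma jk_apply (v : EuclideanSpace ℝ (Fin k)) : jk k d v = pairL2 k d v 0 := rfl
lemma jd_apply (w : EuclideanSpace ℝ (Fin d)) : jd k d w = pairL2 k d 0 w := rfl

lemma pair_eq_add (x : EuclideanSpace ℝ (Fin k)) (l : EuclideanSpace ℝ (Fin d)) :
    pairL2 k d x l = jk k d x + pairL2 k d 0 l := by
  have h : pairL2 k d x l - pairL2 k d 0 l = pairL2 k d x 0 := by
    rw [pair_sub]; simp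
  rw [jk_apply, ← h]; abel

lemma pair_eq_add' (x : EuclideanSpace ℝ (Fin k)) (l : EuclideanSpace ℝ (Fin d)) :
    pairL2 k d x l = jd k d l + pairL2 k d x 0 := by
  have h : pairL2 k d x l - pairL2 k d x 0 = pairL2 k d 0 l := by
    rw [pair_sub]; simp
  rw [jd_apply, ← h]; abel

lemma hasGradientAt_fst (L : ProdL2 k d → ℝ) (hdiff : Differentiable ℝ L)
    (x : EuclideanSpace ℝ (Fin k)) (l : EuclideanSpace ℝ (Fin d)) :
    HasGradientAt (fun y => L (pairL2 k d y l)) ((gradient L (pairL2 k d x l)).fst) x := by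
  have hL : HasFDerivAt L
      (InnerProductSpace.toDual ℝ _ (gradient L (pairL2 k d x l))) (pairL2 k d x l) :=
    (hdiff _).hasGradientAt.hasFDerivAt
  have hι : HasFDerivAt (fun y => pairL2 k d y l) (jk k d) x := by
    have h := ((jk k d).hasFDerivAt (x := x)).add_const (pairL2 k d 0 l)
    simpa only [← pair_eq_add] using h
  have hcomp := hL.comp x hι
  rw [hasGradientAt_iff_hasFDerivAt]
  refine HasFDerivAt.congr_fderiv hcomp ?_
  ext v
  simp only [ContinuousLinearMap.coe_comp', Function.comp_apply, InnerProductSpace.toDual_apply_apply,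
    jk_apply, inner_pair]
  simp

lemma hasGradientAt_snd (L : ProdL2 k d → ℝ) (hdiff : Differentiable ℝ L)
    (x : EuclideanSpace ℝ (Fin k)) (l : EuclideanSpace ℝ (Fin d)) :
    HasGradientAt (fun m => L (pairL2 k d x m)) ((gradient L (pairL2 k d x l)).snd) l := by
  have hL : HasFDerivAt L
      (InnerProductSpace.toDual ℝ _ (gradient L (pairL2 k d x l))) (pairL2 k d x l) :=
    (hdiff _).hasGradientAt.hasFDerivAt
  have hι : HasFDerivAt (fun m => pairL2 k d x m) (jd k d) l := by
    have h := ((jd k d).hasFDerivAt (x := l)).add_const (pairL2 k d x 0)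
    simpa only [← pair_eq_add'] using h
  have hcomp := hL.comp l hι
  rw [hasGradientAt_iff_hasFDerivAt]
  refine HasFDerivAt.congr_fderiv hcomp ?_
  ext w
  simp only [ContinuousLinearMap.coe_comp', Function.comp_apply, InnerProductSpace.toDual_apply_apply,
    jd_apply, inner_pair]
  simp

lemma quad_bound (K : Set (EuclideanSpace ℝ (Fin d))) (hKconv : Convex ℝ K)
    (L : ProdL2 k d → ℝ) (ℓ : ℝ) (hℓ : 0 ≤ ℓ) (hdiff : Differentiable ℝ L)
    (hlip : LipschitzOnWith ℓ.toNNReal (gradient L)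
      {p : ProdL2 k d | ((WithLp.equiv 2 _) p).2 ∈ K})
    (p q : ProdL2 k d) (hp : p.snd ∈ K) (hq : q.snd ∈ K) :
    |L q - L p - ⟪gradient L p, q - p⟫| ≤ (ℓ * ‖q - p‖) * ‖q - p‖ := by
  have hfd : ∀ w : ProdL2 k d, fderiv ℝ L w = InnerProductSpace.toDual ℝ _ (gradient L w) := by
    intro w
    rw [gradient]
    exact (LinearIsometryEquiv.apply_symm_apply _ _).symm
  have hS : ∀ z : ProdL2 k d, z.snd ∈ K →
      z ∈ {p : ProdL2 k d | ((WithLp.equiv 2 _) p).2 ∈ K} := by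
    intro z hz
    exact hz
  have bound : ∀ z ∈ segment ℝ p q, ‖fderiv ℝ L z - fderiv ℝ L p‖ ≤ ℓ * ‖q - p‖ := by
    rintro z ⟨a, b, ha, hb, hab, rfl⟩
    have hzK : (a • p + b • q).snd ∈ K := by
      have hrw : (a • p + b • q).snd = a • p.snd + b • q.snd := rfl
      rw [hrw]
      exact hKconv hp hq ha hb hab
    rw [hfd, hfd, ← LinearIsometryEquiv.map_sub, LinearIsometryEquiv.norm_map]
    have hd := (lipschitzOnWith_iff_dist_le_mul.mp hlip) _ (hS _ hzK) p (hS p hp)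
    rw [dist_eq_norm, dist_eq_norm, Real.coe_toNNReal _ hℓ] at hd
    refine hd.trans ?_
    have hz' : a • p + b • q - p = b • (q - p) := by
      rw [show a = 1 - b by linarith]; module
    rw [hz', norm_smul, Real.norm_eq_abs, abs_of_nonneg hb]
    have hb1 : b ≤ 1 := by linarith
    have hmm : b * ‖q - p‖ ≤ ‖q - p‖ := mul_le_of_le_one_left (norm_nonneg _) hb1
    exact mul_le_mul_of_nonneg_left hmm hℓ
  have hmvt := Convex.norm_image_sub_le_of_norm_hasFDerivWithin_le'
    (f := L) (f' := fun z => fderiv ℝ L z) (φ := fderiv ℝ L p) (s := segment ℝ p q)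
    (fun z _ => ((hdiff z).hasFDerivAt).hasFDerivWithinAt) bound (convex_segment p q)
    (left_mem_segment ℝ p q) (right_mem_segment ℝ p q)
  rw [hfd] at hmvt
  simpa [Real.norm_eq_abs, InnerProductSpace.toDual_apply_apply] using hmvt

end Prod

end MaxSmoothAux

open MaxSmoothAux

set_option maxHeartbeats 1000000 in
set_option synthInstance.maxHeartbeats 400000 in
/-- **Smoothness of the max-function (Lin–Jin–Jordan, Lemma 4.3).**
Let `K ⊆ ℝ^d` be nonempty, closed and convex, and let `L : ℝ^k × ℝ^d → ℝ` be differentiable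
with `ℓ`-Lipschitz gradient on `ℝ^k × K`, such that `λ ↦ L(x,λ)` is `μ`-strongly concave on
`K` for every `x`.  Then the maximum of `L(x,·)` over `K` is attained at a unique point
`λ*(x)`; with `κ = ℓ/μ` and `φ(x) = max_{λ∈K} L(x,λ) = L(x,λ*(x))`:
(i) `λ*` is `κ`-Lipschitz; (ii) `φ` is differentiable with `∇φ(x) = ∇_x L(x, λ*(x))`
(the partial gradient in `x` at frozen `λ = λ*(x)`); (iii) `∇φ` is `(ℓ + κℓ)`-Lipschitz. -/
theorem max_function_smoothness
    (k d : ℕ) (K : Set (EuclideanSpace ℝ (Fin d)))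
    (hKne : K.Nonempty) (hKcl : IsClosed K) (hKconv : Convex ℝ K)
    (L : ProdL2 k d → ℝ) (ℓ μ : ℝ) (hμ : 0 < μ) (hℓ : 0 ≤ ℓ)
    (hdiff : Differentiable ℝ L)
    (hlip : LipschitzOnWith ℓ.toNNReal (gradient L)
      {p : ProdL2 k d | ((WithLp.equiv 2 _) p).2 ∈ K})
    (hconc : ∀ x : EuclideanSpace ℝ (Fin k),
      StrongConcaveOn K μ fun l => L (pairL2 k d x l)) :
    ∃ lstar : EuclideanSpace ℝ (Fin k) → EuclideanSpace ℝ (Fin d),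
      (∀ x, lstar x ∈ K ∧
        (∀ l ∈ K, L (pairL2 k d x l) ≤ L (pairL2 k d x (lstar x))) ∧
        (∀ l ∈ K, (∀ l' ∈ K, L (pairL2 k d x l') ≤ L (pairL2 k d x l)) → l = lstar x)) ∧
      LipschitzWith (ℓ / μ).toNNReal lstar ∧
      Differentiable ℝ (fun x => L (pairL2 k d x (lstar x))) ∧
      (∀ x, gradient (fun y => L (pairL2 k d y (lstar y))) x =
        gradient (fun y => L (pairL2 k d y (lstar x))) x) ∧
      LipschitzWith (ℓ + (ℓ / μ) * ℓ).toNNReal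
        (gradient fun x => L (pairL2 k d x (lstar x))) := by
  classical
  set G : EuclideanSpace ℝ (Fin k) → EuclideanSpace ℝ (Fin d) → EuclideanSpace ℝ (Fin d) :=
    fun x m => (gradient L (pairL2 k d x m)).snd with hGdef
  have hGgrad : ∀ x, ∀ m : EuclideanSpace ℝ (Fin d),
      HasGradientAt (fun m' => L (pairL2 k d x m')) (G x m) m :=
    fun x m => hasGradientAt_snd L hdiff x m
  have hκ : (0:ℝ) ≤ ℓ / μ := div_nonneg hℓ hμ.le
  have hlip' : ∀ p q : ProdL2 k d, p.snd ∈ K → q.snd ∈ K →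
      ‖gradient L p - gradient L q‖ ≤ ℓ * ‖p - q‖ := by
    intro p q hp hq
    have hd := (lipschitzOnWith_iff_dist_le_mul.mp hlip) p hp
      q hq
    rwa [dist_eq_norm, dist_eq_norm, Real.coe_toNNReal _ hℓ] at hd
  have exists_max : ∀ x, ∃ a, a ∈ K ∧ ∀ l ∈ K, L (pairL2 k d x l) ≤ L (pairL2 k d x a) := by
    intro x
    obtain ⟨l0, hl0⟩ := hKne
    have hcont : Continuous fun m : EuclideanSpace ℝ (Fin d) => L (pairL2 k d x m) := by
      exact hdiff.continuous.comp
        ((((jd k d).continuous.add continuous_const)).congr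
          fun m => (pair_eq_add' x m).symm)
    set R : ℝ := 2 * (‖G x l0‖ + 1) / μ with hRdef
    have hR : 0 ≤ R := by positivity
    have hCc : IsCompact (K ∩ Metric.closedBall l0 R) :=
      Metric.isCompact_of_isClosed_isBounded (hKcl.inter Metric.isClosed_closedBall)
        (Metric.isBounded_closedBall.subset Set.inter_subset_right)
    have hCne : (K ∩ Metric.closedBall l0 R).Nonempty :=
      ⟨l0, hl0, Metric.mem_closedBall_self hR⟩
    obtain ⟨a, haC, hamax⟩ := hCc.exists_isMaxOn hCne hcont.continuousOn
    refine ⟨a, haC.1, fun l hl => ?_⟩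
    by_cases hlb : l ∈ Metric.closedBall l0 R
    · exact isMaxOn_iff.mp hamax l ⟨hl, hlb⟩
    · have h1 := strongConcaveOn_first_order (hGgrad x) (hconc x) hl0 hl
      have h2 : ⟪G x l0, l - l0⟫ ≤ ‖G x l0‖ * ‖l - l0‖ := real_inner_le_norm _ _
      have hr : R < ‖l - l0‖ := by
        rw [Metric.mem_closedBall, dist_eq_norm] at hlb
        linarith [not_le.mp hlb]
      have hμR : μ * R = 2 * (‖G x l0‖ + 1) := by
        rw [hRdef]; field_simp
      have h4 : 2 * (‖G x l0‖ + 1) ≤ μ * ‖l - l0‖ := by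
        nlinarith [mul_le_mul_of_nonneg_left hr.le hμ.le, hμR]
      have h5 : L (pairL2 k d x l) ≤ L (pairL2 k d x l0) := by
        nlinarith [mul_le_mul_of_nonneg_right h4 (norm_nonneg (l - l0)), norm_nonneg (l - l0)]
      exact h5.trans (isMaxOn_iff.mp hamax l0 ⟨hl0, Metric.mem_closedBall_self hR⟩)
  choose lstar hKmem hmax using exists_max
  have hVI : ∀ x, ∀ b ∈ K, ⟪G x (lstar x), b - lstar x⟫ ≤ 0 :=
    fun x b hb => isMaxOn_inner_le (hGgrad x) hKconv (hKmem x) hb (hmax x)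
  have hkey : ∀ x1 x2, ‖lstar x1 - lstar x2‖ ≤ ℓ / μ * ‖x1 - x2‖ := by
    intro x1 x2
    have hm := strong_mono (hGgrad x1) (hconc x1) (hKmem x2) (hKmem x1)
    have hv1 : ⟪G x1 (lstar x1), lstar x2 - lstar x1⟫ ≤ 0 := hVI x1 _ (hKmem x2)
    have hv2 : ⟪G x2 (lstar x2), lstar x1 - lstar x2⟫ ≤ 0 := hVI x2 _ (hKmem x1)
    have e1 : ⟪G x1 (lstar x2) - G x1 (lstar x1), lstar x1 - lstar x2⟫
        = ⟪G x1 (lstar x2) - G x2 (lstar x2), lstar x1 - lstar x2⟫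
          + ⟪G x2 (lstar x2), lstar x1 - lstar x2⟫
          - ⟪G x1 (lstar x1), lstar x1 - lstar x2⟫ := by
      rw [inner_sub_left, inner_sub_left]; ring
    have e2 : ⟪G x1 (lstar x1), lstar x1 - lstar x2⟫
        = -⟪G x1 (lstar x1), lstar x2 - lstar x1⟫ := by
      rw [show lstar x1 - lstar x2 = -(lstar x2 - lstar x1) by abel, inner_neg_right]
    have e4 : ⟪G x1 (lstar x2) - G x2 (lstar x2), lstar x1 - lstar x2⟫
        ≤ ‖G x1 (lstar x2) - G x2 (lstar x2)‖ * ‖lstar x1 - lstar x2‖ := real_inner_le_norm _ _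
    have e5 : ‖G x1 (lstar x2) - G x2 (lstar x2)‖ ≤ ℓ * ‖x1 - x2‖ := by
      have hsub : G x1 (lstar x2) - G x2 (lstar x2)
          = (gradient L (pairL2 k d x1 (lstar x2))
              - gradient L (pairL2 k d x2 (lstar x2))).snd := rfl
      rw [hsub]
      refine (snd_norm_le _).trans ?_
      have h := hlip' (pairL2 k d x1 (lstar x2)) (pairL2 k d x2 (lstar x2))
        (hKmem x2) (hKmem x2)
      rwa [pair_sub, sub_self, pair_norm_fst] at h
    have hfin : μ * ‖lstar x1 - lstar x2‖ ^ 2 ≤ ℓ * ‖x1 - x2‖ * ‖lstar x1 - lstar x2‖ := by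
      nlinarith [hm, e4, mul_le_mul_of_nonneg_right e5 (norm_nonneg (lstar x1 - lstar x2))]
    rcases eq_or_lt_of_le (norm_nonneg (lstar x1 - lstar x2)) with h0 | h0
    · rw [← h0]; positivity
    · have h1 : μ * ‖lstar x1 - lstar x2‖ ≤ ℓ * ‖x1 - x2‖ :=
        le_of_mul_le_mul_right (by nlinarith [hfin]) h0
      rw [div_mul_eq_mul_div, le_div_iff₀ hμ]
      nlinarith [h1]
  have huniq : ∀ x, ∀ l ∈ K,
      (∀ l' ∈ K, L (pairL2 k d x l') ≤ L (pairL2 k d x l)) → l = lstar x := by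
    intro x l hl hlmax
    have hm := strong_mono (hGgrad x) (hconc x) (hKmem x) hl
    have hv1 : ⟪G x (lstar x), l - lstar x⟫ ≤ 0 := hVI x l hl
    have hv2 : ⟪G x l, lstar x - l⟫ ≤ 0 :=
      isMaxOn_inner_le (hGgrad x) hKconv hl (hKmem x) hlmax
    have e1 : ⟪G x (lstar x) - G x l, l - lstar x⟫
        = ⟪G x (lstar x), l - lstar x⟫ - ⟪G x l, l - lstar x⟫ := inner_sub_left _ _ _
    have e2 : ⟪G x l, l - lstar x⟫ = -⟪G x l, lstar x - l⟫ := by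
      rw [show l - lstar x = -(lstar x - l) by abel, inner_neg_right]
    have h2 : ‖l - lstar x‖ ^ 2 = 0 :=
      le_antisymm (by nlinarith [hm]) (sq_nonneg _)
    have hr : ‖l - lstar x‖ = 0 := sq_eq_zero_iff.mp h2
    exact sub_eq_zero.mp (norm_eq_zero.mp hr)
  have hC : (0:ℝ) ≤ ℓ + ℓ * (ℓ / μ) := by positivity
  have hφ : ∀ x, HasGradientAt (fun y => L (pairL2 k d y (lstar y)))
      ((gradient L (pairL2 k d x (lstar x))).fst) x := by
    intro x
    refine hasGradientAt_of_quad hC fun y => ?_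
    have hq1 := quad_bound K hKconv L ℓ hℓ hdiff hlip
      (pairL2 k d x (lstar x)) (pairL2 k d y (lstar x)) (hKmem x) (hKmem x)
    have hq2 := quad_bound K hKconv L ℓ hℓ hdiff hlip
      (pairL2 k d x (lstar y)) (pairL2 k d y (lstar y)) (hKmem y) (hKmem y)
    have es1 : pairL2 k d y (lstar x) - pairL2 k d x (lstar x) = pairL2 k d (y - x) 0 := by
      rw [pair_sub, sub_self]
    have es2 : pairL2 k d y (lstar y) - pairL2 k d x (lstar y) = pairL2 k d (y - x) 0 := by
      rw [pair_sub, sub_self]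
    rw [es1, pair_norm_fst, inner_pair] at hq1
    rw [es2, pair_norm_fst, inner_pair] at hq2
    simp only [inner_zero_right, add_zero] at hq1 hq2
    have hA : L (pairL2 k d y (lstar x)) ≤ L (pairL2 k d y (lstar y)) := hmax y _ (hKmem x)
    have hB : L (pairL2 k d x (lstar y)) ≤ L (pairL2 k d x (lstar x)) := hmax x _ (hKmem y)
    have hgd : ⟪(gradient L (pairL2 k d x (lstar y))).fst, y - x⟫
        - ⟪(gradient L (pairL2 k d x (lstar x))).fst, y - x⟫
        ≤ ℓ * (ℓ / μ * ‖y - x‖) * ‖y - x‖ := by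
      have e3 : ⟪(gradient L (pairL2 k d x (lstar y))).fst, y - x⟫
          - ⟪(gradient L (pairL2 k d x (lstar x))).fst, y - x⟫
          = ⟪(gradient L (pairL2 k d x (lstar y))).fst
              - (gradient L (pairL2 k d x (lstar x))).fst, y - x⟫ := (inner_sub_left _ _ _).symm
      have e5 : ‖(gradient L (pairL2 k d x (lstar y))).fst
          - (gradient L (pairL2 k d x (lstar x))).fst‖ ≤ ℓ * ‖lstar y - lstar x‖ := by
        have hsub : (gradient L (pairL2 k d x (lstar y))).fst
            - (gradient L (pairL2 k d x (lstar x))).fst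
            = (gradient L (pairL2 k d x (lstar y))
                - gradient L (pairL2 k d x (lstar x))).fst := rfl
        rw [hsub]
        refine (fst_norm_le _).trans ?_
        have h := hlip' (pairL2 k d x (lstar y)) (pairL2 k d x (lstar x))
          (hKmem y) (hKmem x)
        rwa [pair_sub, sub_self, pair_norm_snd] at h
      have e6 : ‖lstar y - lstar x‖ ≤ ℓ / μ * ‖y - x‖ := hkey y x
      have e4 := real_inner_le_norm ((gradient L (pairL2 k d x (lstar y))).fst
          - (gradient L (pairL2 k d x (lstar x))).fst) (y - x)
      rw [e3]
      nlinarith [mul_le_mul_of_nonneg_right e5 (norm_nonneg (y - x)),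
        mul_le_mul_of_nonneg_right (mul_le_mul_of_nonneg_left e6 hℓ) (norm_nonneg (y - x)), e4]
    have habs1 := abs_le.mp hq1
    have habs2 := abs_le.mp hq2
    rw [abs_le]
    constructor
    · nlinarith [habs1.1, hA, mul_nonneg (mul_nonneg hℓ hκ) (sq_nonneg ‖y - x‖)]
    · nlinarith [habs2.2, hB, hgd]
  refine ⟨lstar, fun x => ⟨hKmem x, hmax x, huniq x⟩, ?_, ?_, ?_, ?_⟩
  · refine LipschitzWith.of_dist_le_mul fun x y => ?_
    rw [dist_eq_norm, dist_eq_norm, Real.coe_toNNReal _ hκ]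
    exact hkey x y
  · exact fun x => (hφ x).differentiableAt
  · intro x
    rw [(hφ x).gradient, (hasGradientAt_fst L hdiff x (lstar x)).gradient]
  · have hgeq : (gradient fun x => L (pairL2 k d x (lstar x)))
        = fun x => (gradient L (pairL2 k d x (lstar x))).fst :=
      funext fun x => (hφ x).gradient
    rw [hgeq]
    refine LipschitzWith.of_dist_le_mul fun x y => ?_
    rw [dist_eq_norm, dist_eq_norm, Real.coe_toNNReal _ (by positivity)]
    have e0 : (gradient L (pairL2 k d x (lstar x))).fst
        - (gradient L (pairL2 k d y (lstar y))).fst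
        = (gradient L (pairL2 k d x (lstar x)) - gradient L (pairL2 k d y (lstar y))).fst := rfl
    rw [e0]
    refine (fst_norm_le _).trans ?_
    have h1 := hlip' (pairL2 k d x (lstar x)) (pairL2 k d y (lstar y)) (hKmem x) (hKmem y)
    rw [pair_sub] at h1
    refine h1.trans ?_
    have h2 : ‖pairL2 k d (x - y) (lstar x - lstar y)‖ ≤ (1 + ℓ / μ) * ‖x - y‖ := by
      refine le_on_sq (norm_nonneg _) (by positivity) ?_
      rw [pair_norm_sq]
      have h3 := hkey x y
      nlinarith [mul_le_mul h3 h3 (norm_nonneg (lstar x - lstar y))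
          (by positivity : (0:ℝ) ≤ ℓ / μ * ‖x - y‖),
        mul_nonneg hκ (sq_nonneg ‖x - y‖)]
    calc ℓ * ‖pairL2 k d (x - y) (lstar x - lstar y)‖ ≤ ℓ * ((1 + ℓ / μ) * ‖x - y‖) :=
        mul_le_mul_of_nonneg_left h2 hℓ
      _ = (ℓ + ℓ / μ * ℓ) * ‖x - y‖ := by ring


end
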